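/- Let A ∈ ℝ^{n×n}, B ∈ ℝ^{n×m}, K ∈ ℝ^{m×n}, and let L be a symmetric Laplacian of a connected undirected graph on M vertices with eigenvalues 0 = λ₁ < λ₂ ≤ … ≤ λ_M. Consider the dynamics x(t+1) = (I_M ⊗ A + L ⊗ BK) x(t). If ρ(A + λ_i B K) < 1 for all i = 2,…,M, then for all agents i,j, ‖x_i(t) − x_j(t)‖ → 0 as t → ∞. -/

import Mathlib

open Matrix Filter Topology
open scoped Kronecker ENNReal NNReal

attribute [local instance] Matrix.linftyOpNormedAddCommGroup Matrix.linftyOpNormedRing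
  Matrix.linftyOpNormedAlgebra

private lemma aux_norm_pow_tendsto_zero {N : ℕ} (C : Matrix (Fin N) (Fin N) ℂ)
    (h : spectralRadius ℂ C < 1) :
    Tendsto (fun t : ℕ => ‖C ^ t‖) atTop (𝓝 0) := by
  obtain ⟨c, hc1, hc2⟩ := exists_between h
  have hctop : c ≠ ⊤ := (hc2.trans ENNReal.one_lt_top).ne
  set r : ℝ := c.toReal with hr
  have hr1 : r < 1 := by
    have := (ENNReal.toReal_lt_toReal hctop ENNReal.one_ne_top).mpr hc2
    simpa using this
  have hr0 : 0 ≤ r := ENNReal.toReal_nonneg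
  have hg := spectrum.pow_norm_pow_one_div_tendsto_nhds_spectralRadius C
  have hev : ∀ᶠ t : ℕ in atTop, ENNReal.ofReal (‖C ^ t‖ ^ (1/(t:ℝ))) < c :=
    hg.eventually_lt_const hc1
  have hev2 : ∀ᶠ t : ℕ in atTop, ‖C ^ t‖ ≤ r ^ t := by
    filter_upwards [hev, eventually_ge_atTop 1] with t ht ht1
    have ht0 : (0:ℝ) < t := by exact_mod_cast ht1
    have hn : ‖C ^ t‖ ^ (1/(t:ℝ)) < r := by
      rwa [ENNReal.ofReal_lt_iff_lt_toReal (by positivity) hctop] at ht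
    have h2 : (‖C ^ t‖ ^ (1/(t:ℝ))) ^ (t:ℝ) ≤ r ^ (t:ℝ) :=
      Real.rpow_le_rpow (by positivity) hn.le ht0.le
    rwa [← Real.rpow_mul (norm_nonneg _),
      one_div_mul_cancel ht0.ne', Real.rpow_one, Real.rpow_natCast] at h2
  exact squeeze_zero' (Eventually.of_forall fun t => norm_nonneg _) hev2
    (tendsto_pow_atTop_nhds_zero_of_lt_one hr0 hr1)

private lemma aux_entry_pow_tendsto_zero {N : ℕ} (C : Matrix (Fin N) (Fin N) ℝ)
    (h : spectralRadius ℂ (C.map Complex.ofReal) < 1) (q p : Fin N) :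
    Tendsto (fun t : ℕ => (C ^ t) q p) atTop (𝓝 0) := by
  have h1 := aux_norm_pow_tendsto_zero _ h
  have hbound : ∀ t : ℕ, ‖(C ^ t) q p‖ ≤ ‖(C.map Complex.ofReal) ^ t‖ := by
    intro t
    have hmp : (C.map Complex.ofReal) ^ t = (C ^ t).map Complex.ofReal := by
      have := map_pow (Complex.ofRealHom.mapMatrix (m := Fin N)) C t
      exact this.symm
    rw [hmp]
    have he : ‖((C ^ t).map Complex.ofReal) q p‖₊ ≤ ‖(C ^ t).map Complex.ofReal‖₊ := by
      rw [Matrix.linfty_opNNNorm_def]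
      refine le_trans (Finset.single_le_sum (f := fun l => ‖((C ^ t).map Complex.ofReal) q l‖₊)
          (fun _ _ => zero_le) (Finset.mem_univ p)) ?_
      exact Finset.le_sup (f := fun i' => ∑ l, ‖((C ^ t).map Complex.ofReal) i' l‖₊)
        (Finset.mem_univ q)
    have h2 : ‖((C ^ t).map Complex.ofReal) q p‖ ≤ ‖(C ^ t).map Complex.ofReal‖ := he
    have h3 : ‖((C ^ t).map Complex.ofReal) q p‖ = ‖(C ^ t) q p‖ := by
      rw [Matrix.map_apply, Complex.norm_real]
    rwa [h3] at h2
  rw [tendsto_zero_iff_norm_tendsto_zero]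
  exact squeeze_zero (fun t => norm_nonneg _) hbound h1

theorem stmt_6 {n m M : ℕ} (hM : 0 < M)
    (A : Matrix (Fin n) (Fin n) ℝ) (B : Matrix (Fin n) (Fin m) ℝ)
    (K : Matrix (Fin m) (Fin n) ℝ)
    (L : Matrix (Fin M) (Fin M) ℝ) (hsym : L.IsSymm)
    (hones : L.mulVec (fun _ => (1 : ℝ)) = 0)
    (U : Matrix (Fin M) (Fin M) ℝ) (lam : Fin M → ℝ)
    (hU : Uᵀ * U = 1) (hdiag : Uᵀ * L * U = Matrix.diagonal lam)
    (hlam0 : lam ⟨0, hM⟩ = 0)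
    (hconn : ∀ i : Fin M, i ≠ ⟨0, hM⟩ → 0 < lam i)
    (hmono : Monotone lam)
    (hρ : ∀ i : Fin M, i ≠ ⟨0, hM⟩ →
      spectralRadius ℂ (((A + lam i • (B * K)).map Complex.ofReal)) < 1)
    (x : ℕ → (Fin M × Fin n) → ℝ)
    (hx : ∀ t, x (t + 1) =
      ((1 : Matrix (Fin M) (Fin M) ℝ) ⊗ₖ A + L ⊗ₖ (B * K)).mulVec (x t)) :
    ∀ i j : Fin M,
      Tendsto (fun t => ‖(fun p : Fin n => x t (i, p) - x t (j, p))‖) atTop (𝓝 0) := by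
  intro i j
  set e0 : Fin M := ⟨0, hM⟩
  have hUUT : U * Uᵀ = 1 := mul_eq_one_comm.mp hU
  -- Uᵀ L = diagonal lam * Uᵀ
  have hUL : Uᵀ * L = Matrix.diagonal lam * Uᵀ := by
    have h1 : Uᵀ * L * U * Uᵀ = Matrix.diagonal lam * Uᵀ := by rw [hdiag]
    rwa [Matrix.mul_assoc (Uᵀ * L) U Uᵀ, hUUT, Matrix.mul_one] at h1
  have hULe : ∀ k l : Fin M, ∑ i', U i' k * L i' l = lam k * U l k := by
    intro k l
    have h0 := congrFun (congrFun hUL k) l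
    have h1 : (Uᵀ * L) k l = ∑ i', U i' k * L i' l := by
      rw [Matrix.mul_apply]
      exact Finset.sum_congr rfl fun i' _ => by rw [Matrix.transpose_apply]
    have h2 : (Matrix.diagonal lam * Uᵀ) k l = lam k * U l k := by
      rw [Matrix.diagonal_mul, Matrix.transpose_apply]
    rw [← h1, ← h2]
    exact h0
  -- the transformed modes
  set y : Fin M → ℕ → Fin n → ℝ := fun k t p => ∑ i', U i' k * x t (i', p) with hy
  -- recursion for each mode
  have hrec : ∀ (k : Fin M) (t : ℕ),
      y k (t + 1) = (A + lam k • (B * K)).mulVec (y k t) := by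
    intro k t
    funext p
    have hxt : ∀ (i' : Fin M) (p : Fin n), x (t+1) (i', p) =
        ∑ l : Fin M, ∑ q : Fin n,
          ((if i' = l then (1:ℝ) else 0) * A p q + L i' l * (B*K) p q) * x t (l, q) := by
      intro i' p
      rw [hx t]
      simp [Matrix.mulVec, dotProduct, Fintype.sum_prod_type, Matrix.add_apply,
        Matrix.kroneckerMap_apply, Matrix.one_apply]
    have lhs : y k (t+1) p = ∑ l : Fin M, ∑ q : Fin n,
        (U l k * A p q + lam k * U l k * (B*K) p q) * x t (l, q) := by
      simp only [hy]
      rw [show (∑ i', U i' k * x (t+1) (i', p)) =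
          ∑ i', ∑ l, ∑ q, U i' k *
            (((if i' = l then (1:ℝ) else 0) * A p q + L i' l * (B*K) p q) * x t (l, q)) by
        refine Finset.sum_congr rfl fun i' _ => ?_
        rw [hxt i' p, Finset.mul_sum]
        exact Finset.sum_congr rfl fun l _ => by rw [Finset.mul_sum]]
      rw [Finset.sum_comm]
      refine Finset.sum_congr rfl fun l _ => ?_
      rw [Finset.sum_comm]
      refine Finset.sum_congr rfl fun q _ => ?_
      have : ∑ i', U i' k *
          (((if i' = l then (1:ℝ) else 0) * A p q + L i' l * (B*K) p q) * x t (l, q))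
          = (∑ i', U i' k * (if i' = l then (1:ℝ) else 0)) * (A p q * x t (l, q))
            + (∑ i', U i' k * L i' l) * ((B*K) p q * x t (l, q)) := by
        rw [Finset.sum_mul, Finset.sum_mul, ← Finset.sum_add_distrib]
        exact Finset.sum_congr rfl fun i' _ => by ring
      rw [this, hULe k l]
      have hdelta : (∑ i', U i' k * (if i' = l then (1:ℝ) else 0)) = U l k := by
        simp
      rw [hdelta]; ring
    rw [lhs]
    simp only [Matrix.mulVec, dotProduct, Matrix.add_apply, Matrix.smul_apply, smul_eq_mul, hy]
    rw [Finset.sum_comm]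
    refine Finset.sum_congr rfl fun q _ => ?_
    rw [Finset.mul_sum]
    exact Finset.sum_congr rfl fun l _ => by ring
  -- closed form
  have hclosed : ∀ (k : Fin M) (t : ℕ),
      y k t = ((A + lam k • (B * K)) ^ t).mulVec (y k 0) := by
    intro k t
    induction t with
    | zero => simp [Matrix.mulVec]
    | succ t ih =>
      rw [hrec k t, ih, pow_succ', ← Matrix.mulVec_mulVec]
  -- each nonzero mode tends to zero
  have hmode : ∀ k : Fin M, k ≠ e0 → ∀ p : Fin n,
      Tendsto (fun t => y k t p) atTop (𝓝 0) := by
    intro k hk p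
    set Ck : Matrix (Fin n) (Fin n) ℝ := A + lam k • (B * K) with hCk
    have hyt : ∀ t, y k t p = ∑ q, (Ck ^ t) p q * y k 0 q := by
      intro t
      rw [hclosed k t]
      simp [Matrix.mulVec, dotProduct, hCk]
    simp only [hyt]
    have hT : Tendsto (fun t => ∑ q : Fin n, (Ck ^ t) p q * y k 0 q)
        atTop (𝓝 (∑ q : Fin n, 0)) := by
      refine tendsto_finset_sum _ fun q _ => ?_
      simpa using (aux_entry_pow_tendsto_zero Ck (hρ k hk) p q).mul_const (y k 0 q)
    simpa using hT
  -- first column of U is constant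
  have hcol : ∀ i' : Fin M, U i' e0 = U i e0 → True := fun _ _ => trivial
  have hconst : ∀ i' j' : Fin M, U i' e0 = U j' e0 := by
    -- coordinates of ones vector
    set c : Fin M → ℝ := Uᵀ.mulVec (fun _ => (1:ℝ)) with hc
    have hUc : U.mulVec c = fun _ => (1:ℝ) := by
      rw [hc, Matrix.mulVec_mulVec, hUUT, Matrix.one_mulVec]
    have hDc : Matrix.diagonal lam *ᵥ c = 0 := by
      rw [hc, Matrix.mulVec_mulVec, ← hUL, ← Matrix.mulVec_mulVec, hones, Matrix.mulVec_zero]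
    have hck : ∀ k : Fin M, k ≠ e0 → c k = 0 := by
      intro k hk
      have := congrFun hDc k
      simp only [Matrix.mulVec_diagonal, Pi.zero_apply] at this
      rcases mul_eq_zero.mp this with h | h
      · exact absurd h (hconn k hk).ne'
      · exact h
    -- so ones = c e0 • column e0
    have hones' : ∀ i' : Fin M, c e0 * U i' e0 = 1 := by
      intro i'
      have := congrFun hUc i'
      simp only [Matrix.mulVec, dotProduct] at this
      rw [← this]
      rw [Finset.sum_eq_single e0]
      · ring
      · intro k _ hk; rw [hck k hk]; ring
      · intro h; exact absurd (Finset.mem_univ e0) h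
    intro i' j'
    have h1 := hones' i'
    have h2 := hones' j'
    have hc0 : c e0 ≠ 0 := by
      intro h; rw [h, zero_mul] at h1; exact one_ne_zero h1.symm
    field_simp at h1 h2
    calc U i' e0 = 1 / c e0 := by field_simp; linarith [h1]
      _ = U j' e0 := by field_simp; linarith [h2]
  -- x in terms of modes
  have hxy : ∀ (t : ℕ) (i' : Fin M) (p : Fin n),
      x t (i', p) = ∑ k, U i' k * y k t p := by
    intro t i' p
    simp only [hy]
    rw [show (∑ k, U i' k * ∑ i'', U i'' k * x t (i'', p))
        = ∑ k, ∑ i'', U i' k * (U i'' k * x t (i'', p)) by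
      exact Finset.sum_congr rfl fun k _ => Finset.mul_sum _ _ _]
    rw [Finset.sum_comm]
    have : ∀ i'' : Fin M, ∑ k, U i' k * (U i'' k * x t (i'', p))
        = (U * Uᵀ) i' i'' * x t (i'', p) := by
      intro i''
      rw [Matrix.mul_apply, Finset.sum_mul]
      exact Finset.sum_congr rfl fun k _ => by simp [Matrix.transpose_apply]; ring
    simp only [this, hUUT, Matrix.one_apply]
    simp
  -- the difference
  have hdiff : ∀ (t : ℕ) (p : Fin n), x t (i, p) - x t (j, p)
      = ∑ k ∈ Finset.univ.erase e0, (U i k - U j k) * y k t p := by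
    intro t p
    rw [hxy t i p, hxy t j p, ← Finset.sum_sub_distrib]
    rw [show (∑ k, (U i k * y k t p - U j k * y k t p))
        = ∑ k, (U i k - U j k) * y k t p by
      exact Finset.sum_congr rfl fun k _ => by ring]
    rw [← Finset.sum_erase_add _ _ (Finset.mem_univ e0), hconst i j]
    simp
  -- conclude
  have hT : Tendsto (fun t => (fun p : Fin n => x t (i, p) - x t (j, p)))
      atTop (𝓝 (0 : Fin n → ℝ)) := by
    rw [tendsto_pi_nhds]
    intro p
    simp only [hdiff, Pi.zero_apply]
    have : Tendsto (fun t => ∑ k ∈ Finset.univ.erase e0, (U i k - U j k) * y k t p)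
        atTop (𝓝 (∑ k ∈ Finset.univ.erase e0, (0:ℝ))) := by
      refine tendsto_finset_sum _ fun k hk => ?_
      have hk' : k ≠ e0 := Finset.ne_of_mem_erase hk
      simpa using (hmode k hk' p).const_mul (U i k - U j k)
    simpa using this
  simpa using hT.norm
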